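/- The algebra 𝒜q is generated as an F-algebra by the two elements W_0, W_1 together with the central elements Δ_{k+1} (k ∈ ℕ); that is, the smallest unital F-subalgebra of 𝒜q containing W_0, W_1 and all Δ_{k+1} is 𝒜q itself. -/

import Mathlib

/- STATEMENT 5: 𝒜q is generated by W_0, W_1 and the central elements Δ_{k+1}. -/

noncomputable section

namespace Alt

/-- The base field `F = ℚ(q)`. -/
abbrev F : Type := RatFunc ℚ

/-- The indeterminate `q`. -/
def q : F := RatFunc.X

/-- Commutator `[x,y] = xy - yx`. -/
def br {A : Type*} [Ring A] (x y : A) : A := x * y - y * x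

/-- `q`-commutator `[x,y]_q = q·xy - q⁻¹·yx`. -/
def qbr {A : Type*} [Ring A] [Algebra F A] (x y : A) : A :=
  q • (x * y) - q⁻¹ • (y * x)

/-- `q⁻¹`-commutator `[x,y]_{q⁻¹} = q⁻¹·xy - q·yx`. -/
def qbr' {A : Type*} [Ring A] [Algebra F A] (x y : A) : A :=
  q⁻¹ • (x * y) - q • (y * x)

/-- Generators of the algebra `𝒜q`: `wm k ↦ W_{-k}`, `wp k ↦ W_{k+1}`,
`g k ↦ G_{k+1}`, `gt k ↦ G̃_{k+1}`. -/
inductive Gen : Type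
  | wm : ℕ → Gen
  | wp : ℕ → Gen
  | g : ℕ → Gen
  | gt : ℕ → Gen

/-- The free `F`-algebra on the generators. -/
abbrev FA : Type := FreeAlgebra F Gen

/-- `W_{-k}` in the free algebra. -/
def fWm (k : ℕ) : FA := FreeAlgebra.ι F (Gen.wm k)
/-- `W_{k+1}` in the free algebra. -/
def fWp (k : ℕ) : FA := FreeAlgebra.ι F (Gen.wp k)
/-- `G_{k+1}` in the free algebra. -/
def fG (k : ℕ) : FA := FreeAlgebra.ι F (Gen.g k)
/-- `G̃_{k+1}` in the free algebra. -/
def fGt (k : ℕ) : FA := FreeAlgebra.ι F (Gen.gt k)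

/-- The defining relations of `𝒜q` (with parameter `ρ`). -/
inductive rel (ρ : F) : FA → FA → Prop
  | r1a (k : ℕ) : rel ρ (br (fWm 0) (fWp k)) ((q + q⁻¹)⁻¹ • (fGt k - fG k))
  | r1b (k : ℕ) : rel ρ (br (fWm k) (fWp 0)) ((q + q⁻¹)⁻¹ • (fGt k - fG k))
  | r2a (k : ℕ) : rel ρ (qbr (fWm 0) (fG k)) (ρ • fWm (k + 1))
  | r2b (k : ℕ) : rel ρ (qbr (fGt k) (fWm 0)) (ρ • fWm (k + 1))
  | r3a (k : ℕ) : rel ρ (qbr (fG k) (fWp 0)) (ρ • fWp (k + 1))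
  | r3b (k : ℕ) : rel ρ (qbr (fWp 0) (fGt k)) (ρ • fWp (k + 1))
  | r4a (k l : ℕ) : rel ρ (br (fWm k) (fWm l)) 0
  | r4b (k l : ℕ) : rel ρ (br (fWp k) (fWp l)) 0
  | r5 (k l : ℕ) : rel ρ (br (fWm k) (fWp l) + br (fWp k) (fWm l)) 0
  | r6 (k l : ℕ) : rel ρ (br (fWm k) (fG l) + br (fG k) (fWm l)) 0
  | r7 (k l : ℕ) : rel ρ (br (fWm k) (fGt l) + br (fGt k) (fWm l)) 0
  | r8 (k l : ℕ) : rel ρ (br (fWp k) (fG l) + br (fG k) (fWp l)) 0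
  | r9 (k l : ℕ) : rel ρ (br (fWp k) (fGt l) + br (fGt k) (fWp l)) 0
  | r10a (k l : ℕ) : rel ρ (br (fG k) (fG l)) 0
  | r10b (k l : ℕ) : rel ρ (br (fGt k) (fGt l)) 0
  | r11 (k l : ℕ) : rel ρ (br (fGt k) (fG l) + br (fG k) (fGt l)) 0

/-- The algebra `𝒜q`: the quotient of the free algebra by the two-sided ideal
generated by the defining relations. -/
abbrev Aq (ρ : F) : Type := RingQuot (rel ρ)

/-- The generator `W_{-k}` of `𝒜q`. -/
def Wm (ρ : F) (k : ℕ) : Aq ρ := RingQuot.mkAlgHom F (rel ρ) (fWm k)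
/-- The generator `W_{k+1}` of `𝒜q`. -/
def Wp (ρ : F) (k : ℕ) : Aq ρ := RingQuot.mkAlgHom F (rel ρ) (fWp k)
/-- The generator `G_{k+1}` of `𝒜q`. -/
def G (ρ : F) (k : ℕ) : Aq ρ := RingQuot.mkAlgHom F (rel ρ) (fG k)
/-- The generator `G̃_{k+1}` of `𝒜q`. -/
def Gt (ρ : F) (k : ℕ) : Aq ρ := RingQuot.mkAlgHom F (rel ρ) (fGt k)

/-- The element `Y_{n+1}` of `𝒜q`. -/
def Y (ρ : F) (n : ℕ) : Aq ρ :=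
  q ^ (-(n : ℤ) - 1) • G ρ n + q ^ ((n : ℤ) + 1) • Gt ρ n -
    (q ^ (2 : ℤ) - q ^ (-2 : ℤ)) •
      ∑ k ∈ Finset.range (n + 1), q ^ (2 * (k : ℤ) - (n : ℤ)) • (Wm ρ k * Wp ρ (n - k)) +
    ((q - q⁻¹) / ρ) •
      ∑ k ∈ Finset.range n, q ^ (2 * (k : ℤ) - (n : ℤ) + 1) • (Gt ρ k * G ρ (n - 1 - k))

/-- The central element `Δ_{n+1} = (Y_{n+1} + σ(Y_{n+1}))/(q^{n+1} + q^{-n-1})`,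
for a given algebra automorphism `σ` of `𝒜q`. -/
def Δd (ρ : F) (σ : Aq ρ ≃ₐ[F] Aq ρ) (n : ℕ) : Aq ρ :=
  (q ^ ((n : ℤ) + 1) + q ^ (-(n : ℤ) - 1))⁻¹ • (Y ρ n + σ (Y ρ n))

lemma key_id {K : Type*} [Field K] {A : Type*} [Ring A] [Algebra K A]
    (c1 c2 a r : K) (g gt s1 s1' s2 s2' : A) :
    (c1 • g + c2 • gt - a • s1 + r • s2) + (c1 • gt + c2 • g - a • s1' + r • s2') =
      (c2 + c1) • (g + gt) - a • (s1 + s1') + r • (s2 + s2') := by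
  module

lemma half_id {K : Type*} [Field K] [CharZero K] {A : Type*} [Ring A] [Algebra K A]
    (g gt : A) : g = (2 : K)⁻¹ • ((g + gt) - (gt - g)) := by
  have h2 : (2 : K) • g = (g + gt) - (gt - g) := by module
  rw [← h2, inv_smul_smul₀ two_ne_zero]

instance : CharZero F := charZero_of_injective_algebraMap (RatFunc.algebraMap_injective ℚ)

lemma hq0 : (q : F) ≠ 0 := RatFunc.X_ne_zero

lemma hc (n : ℕ) : q ^ ((n : ℤ) + 1) + q ^ (-(n : ℤ) - 1) ≠ 0 := by
  have h1 : (q : F) ^ (2 * n + 2) + 1 ≠ 0 := by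
    have : (q : F) ^ (2 * n + 2) + 1 =
        algebraMap (Polynomial ℚ) (RatFunc ℚ) (Polynomial.X ^ (2 * n + 2) + Polynomial.C 1) := by
      simp [q, RatFunc.algebraMap_X]
    rw [this]
    exact RatFunc.algebraMap_ne_zero (Polynomial.X_pow_add_C_ne_zero (by omega) 1)
  have key : q ^ ((n : ℤ) + 1) + q ^ (-(n : ℤ) - 1) =
      q ^ (-(n : ℤ) - 1) * (q ^ (2 * n + 2) + 1) := by
    rw [mul_add, mul_one, ← zpow_natCast q (2 * n + 2)]
    rw [← zpow_add₀ hq0]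
    congr 1
    push_cast
    ring_nf
  rw [key]
  exact mul_ne_zero (zpow_ne_zero _ hq0) h1

lemma rel1a (ρ : F) (k : ℕ) :
    Wm ρ 0 * Wp ρ k - Wp ρ k * Wm ρ 0 = (q + q⁻¹)⁻¹ • (Gt ρ k - G ρ k) := by
  have h := RingQuot.mkAlgHom_rel F (rel.r1a (ρ := ρ) k)
  simpa [br, Wm, Wp, G, Gt, map_sub, map_mul] using h

lemma rel2a (ρ : F) (k : ℕ) :
    q • (Wm ρ 0 * G ρ k) - q⁻¹ • (G ρ k * Wm ρ 0) = ρ • Wm ρ (k + 1) := by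
  have h := RingQuot.mkAlgHom_rel F (rel.r2a (ρ := ρ) k)
  simpa [qbr, Wm, G, map_sub, map_mul] using h

lemma rel3a (ρ : F) (k : ℕ) :
    q • (G ρ k * Wp ρ 0) - q⁻¹ • (Wp ρ 0 * G ρ k) = ρ • Wp ρ (k + 1) := by
  have h := RingQuot.mkAlgHom_rel F (rel.r3a (ρ := ρ) k)
  simpa [qbr, Wp, G, map_sub, map_mul] using h

/-- `𝒜q` is generated as an `F`-algebra by `W_0`, `W_1` and the central elements
`Δ_{k+1}` (`k ∈ ℕ`), where `σ` is the algebra automorphism of `𝒜q` determined by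
`σ(W_{-k}) = W_{k+1}`, `σ(W_{k+1}) = W_{-k}`, `σ(G_{k+1}) = G̃_{k+1}`,
`σ(G̃_{k+1}) = G_{k+1}`. -/
theorem statement5 (ρ : F) (hρ : ρ ≠ 0) (σ : Aq ρ ≃ₐ[F] Aq ρ)
    (hσ1 : ∀ k : ℕ, σ (Wm ρ k) = Wp ρ k) (hσ2 : ∀ k : ℕ, σ (Wp ρ k) = Wm ρ k)
    (hσ3 : ∀ k : ℕ, σ (G ρ k) = Gt ρ k) (hσ4 : ∀ k : ℕ, σ (Gt ρ k) = G ρ k) :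
    Algebra.adjoin F ({Wm ρ 0, Wp ρ 0} ∪ Set.range (Δd ρ σ)) = ⊤ := by
  set A := Algebra.adjoin F ({Wm ρ 0, Wp ρ 0} ∪ Set.range (Δd ρ σ)) with hAdef
  have hWm0 : Wm ρ 0 ∈ A := Algebra.subset_adjoin (Or.inl (Set.mem_insert _ _))
  have hWp0 : Wp ρ 0 ∈ A :=
    Algebra.subset_adjoin (Or.inl (Set.mem_insert_of_mem _ rfl))
  have hΔ : ∀ n, Δd ρ σ n ∈ A := fun n => Algebra.subset_adjoin (Or.inr ⟨n, rfl⟩)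
  have hqq : (q + q⁻¹ : F) ≠ 0 := by
    have := hc 0
    simpa using this
  -- main induction : all generators are in A
  have main : ∀ n : ℕ, Wm ρ n ∈ A ∧ Wp ρ n ∈ A ∧ G ρ n ∈ A ∧ Gt ρ n ∈ A := by
    intro n
    induction n using Nat.strong_induction_on with
    | _ n ih =>
      have hWm : Wm ρ n ∈ A := by
        match n with
        | 0 => exact hWm0
        | m + 1 =>
          have hG := (ih m (Nat.lt_succ_self m)).2.2.1
          have h : Wm ρ (m + 1) =
              ρ⁻¹ • (q • (Wm ρ 0 * G ρ m) - q⁻¹ • (G ρ m * Wm ρ 0)) := by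
            rw [rel2a, inv_smul_smul₀ hρ]
          rw [h]
          exact A.smul_mem (A.sub_mem (A.smul_mem (A.mul_mem hWm0 hG) _)
            (A.smul_mem (A.mul_mem hG hWm0) _)) _
      have hWp : Wp ρ n ∈ A := by
        match n with
        | 0 => exact hWp0
        | m + 1 =>
          have hG := (ih m (Nat.lt_succ_self m)).2.2.1
          have h : Wp ρ (m + 1) =
              ρ⁻¹ • (q • (G ρ m * Wp ρ 0) - q⁻¹ • (Wp ρ 0 * G ρ m)) := by
            rw [rel3a, inv_smul_smul₀ hρ]
          rw [h]
          exact A.smul_mem (A.sub_mem (A.smul_mem (A.mul_mem hG hWp0) _)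
            (A.smul_mem (A.mul_mem hWp0 hG) _)) _
      have hWmle : ∀ m, m ≤ n → Wm ρ m ∈ A := by
        intro m hm
        rcases eq_or_lt_of_le hm with rfl | h
        · exact hWm
        · exact (ih m h).1
      have hWple : ∀ m, m ≤ n → Wp ρ m ∈ A := by
        intro m hm
        rcases eq_or_lt_of_le hm with rfl | h
        · exact hWp
        · exact (ih m h).2.1
      -- the four sums
      have hS1 : (∑ k ∈ Finset.range (n + 1),
          q ^ (2 * (k : ℤ) - (n : ℤ)) • (Wm ρ k * Wp ρ (n - k))) ∈ A := by
        refine Subalgebra.sum_mem _ fun k hk => ?_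
        rw [Finset.mem_range] at hk
        exact A.smul_mem (A.mul_mem (hWmle k (by omega)) (hWple _ (Nat.sub_le n k))) _
      have hS1' : (∑ k ∈ Finset.range (n + 1),
          q ^ (2 * (k : ℤ) - (n : ℤ)) • (Wp ρ k * Wm ρ (n - k))) ∈ A := by
        refine Subalgebra.sum_mem _ fun k hk => ?_
        rw [Finset.mem_range] at hk
        exact A.smul_mem (A.mul_mem (hWple k (by omega)) (hWmle _ (Nat.sub_le n k))) _
      have hS2 : (∑ k ∈ Finset.range n,
          q ^ (2 * (k : ℤ) - (n : ℤ) + 1) • (Gt ρ k * G ρ (n - 1 - k))) ∈ A := by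
        refine Subalgebra.sum_mem _ fun k hk => ?_
        rw [Finset.mem_range] at hk
        exact A.smul_mem (A.mul_mem ((ih k hk).2.2.2 : Gt ρ k ∈ A)
          ((ih (n - 1 - k) (by omega)).2.2.1 : G ρ (n - 1 - k) ∈ A)) _
      have hS2' : (∑ k ∈ Finset.range n,
          q ^ (2 * (k : ℤ) - (n : ℤ) + 1) • (G ρ k * Gt ρ (n - 1 - k))) ∈ A := by
        refine Subalgebra.sum_mem _ fun k hk => ?_
        rw [Finset.mem_range] at hk
        exact A.smul_mem (A.mul_mem ((ih k hk).2.2.1 : G ρ k ∈ A)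
          ((ih (n - 1 - k) (by omega)).2.2.2 : Gt ρ (n - 1 - k) ∈ A)) _
      -- σ applied to Y
      have hYσ : σ (Y ρ n) =
          q ^ (-(n : ℤ) - 1) • Gt ρ n + q ^ ((n : ℤ) + 1) • G ρ n -
            (q ^ (2 : ℤ) - q ^ (-2 : ℤ)) •
              ∑ k ∈ Finset.range (n + 1),
                q ^ (2 * (k : ℤ) - (n : ℤ)) • (Wp ρ k * Wm ρ (n - k)) +
            ((q - q⁻¹) / ρ) •
              ∑ k ∈ Finset.range n,
                q ^ (2 * (k : ℤ) - (n : ℤ) + 1) • (G ρ k * Gt ρ (n - 1 - k)) := by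
        simp [Y, map_sum, hσ1, hσ2, hσ3, hσ4]
      -- key identity
      have hkey : Y ρ n + σ (Y ρ n) =
          (q ^ ((n : ℤ) + 1) + q ^ (-(n : ℤ) - 1)) • (G ρ n + Gt ρ n) -
            (q ^ (2 : ℤ) - q ^ (-2 : ℤ)) •
              ((∑ k ∈ Finset.range (n + 1),
                  q ^ (2 * (k : ℤ) - (n : ℤ)) • (Wm ρ k * Wp ρ (n - k))) +
               (∑ k ∈ Finset.range (n + 1),
                  q ^ (2 * (k : ℤ) - (n : ℤ)) • (Wp ρ k * Wm ρ (n - k)))) +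
            ((q - q⁻¹) / ρ) •
              ((∑ k ∈ Finset.range n,
                  q ^ (2 * (k : ℤ) - (n : ℤ) + 1) • (Gt ρ k * G ρ (n - 1 - k))) +
               (∑ k ∈ Finset.range n,
                  q ^ (2 * (k : ℤ) - (n : ℤ) + 1) • (G ρ k * Gt ρ (n - 1 - k)))) := by
        rw [hYσ]
        simp only [Y]
        exact key_id (K := F) (A := Aq ρ) _ _ _ _ _ _ _ _ _ _
      have hYA : Y ρ n + σ (Y ρ n) ∈ A := by
        have h : Y ρ n + σ (Y ρ n) =
            (q ^ ((n : ℤ) + 1) + q ^ (-(n : ℤ) - 1)) • Δd ρ σ n := by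
          rw [Δd, smul_inv_smul₀ (hc n)]
        rw [h]
        exact A.smul_mem (hΔ n) _
      have hsum : G ρ n + Gt ρ n ∈ A := by
        have h2 : (q ^ ((n : ℤ) + 1) + q ^ (-(n : ℤ) - 1)) • (G ρ n + Gt ρ n) =
            (Y ρ n + σ (Y ρ n)) +
              (q ^ (2 : ℤ) - q ^ (-2 : ℤ)) •
                ((∑ k ∈ Finset.range (n + 1),
                    q ^ (2 * (k : ℤ) - (n : ℤ)) • (Wm ρ k * Wp ρ (n - k))) +
                 (∑ k ∈ Finset.range (n + 1),
                    q ^ (2 * (k : ℤ) - (n : ℤ)) • (Wp ρ k * Wm ρ (n - k)))) -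
              ((q - q⁻¹) / ρ) •
                ((∑ k ∈ Finset.range n,
                    q ^ (2 * (k : ℤ) - (n : ℤ) + 1) • (Gt ρ k * G ρ (n - 1 - k))) +
                 (∑ k ∈ Finset.range n,
                    q ^ (2 * (k : ℤ) - (n : ℤ) + 1) • (G ρ k * Gt ρ (n - 1 - k)))) := by
          rw [hkey]
          abel
        have h3 : G ρ n + Gt ρ n =
            (q ^ ((n : ℤ) + 1) + q ^ (-(n : ℤ) - 1))⁻¹ •
              ((q ^ ((n : ℤ) + 1) + q ^ (-(n : ℤ) - 1)) • (G ρ n + Gt ρ n)) :=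
          (inv_smul_smul₀ (hc n) _).symm
        rw [h3, h2]
        exact A.smul_mem (A.sub_mem (A.add_mem hYA
          (A.smul_mem (A.add_mem hS1 hS1') _)) (A.smul_mem (A.add_mem hS2 hS2') _)) _
      have hdiff : Gt ρ n - G ρ n ∈ A := by
        have h : Gt ρ n - G ρ n =
            (q + q⁻¹) • (Wm ρ 0 * Wp ρ n - Wp ρ n * Wm ρ 0) := by
          rw [rel1a, smul_inv_smul₀ hqq]
        rw [h]
        exact A.smul_mem (A.sub_mem (A.mul_mem hWm0 hWp) (A.mul_mem hWp hWm0)) _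
      have hGn : G ρ n ∈ A := by
        rw [half_id (K := F) (G ρ n) (Gt ρ n)]
        exact A.smul_mem (A.sub_mem hsum hdiff) _
      have hGtn : Gt ρ n ∈ A := by
        have h : Gt ρ n = (G ρ n + Gt ρ n) - G ρ n := by abel
        rw [h]
        exact A.sub_mem hsum hGn
      exact ⟨hWm, hWp, hGn, hGtn⟩
  -- conclude
  rw [eq_top_iff]
  rintro x -
  obtain ⟨y, rfl⟩ := RingQuot.mkAlgHom_surjective F (rel ρ) x
  induction y using FreeAlgebra.induction with
  | grade0 r =>
      rw [AlgHom.commutes]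
      exact A.algebraMap_mem r
  | grade1 g =>
      cases g with
      | wm k => exact (main k).1
      | wp k => exact (main k).2.1
      | g k => exact (main k).2.2.1
      | gt k => exact (main k).2.2.2
  | mul a b ha hb =>
      rw [map_mul]
      exact A.mul_mem ha hb
  | add a b ha hb =>
      rw [map_add]
      exact A.add_mem ha hb

end Alt
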